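/- Let n > 3. There is no real symmetric n×n matrix R ≠ 0 which simultaneously satisfies (i) R² = (tr(R)/2)·R (the Ricci recurrent eigenvalue structure) and (ii) R − a·I has rank at most one for some real number a (the quasi Einstein condition). -/

import Mathlib

open Matrix

lemma rank_add_le' {n : ℕ} (A B : Matrix (Fin n) (Fin n) ℝ) :
    (A + B).rank ≤ A.rank + B.rank := by
  rw [Matrix.rank, Matrix.rank, Matrix.rank, mulVecLin_add]
  refine le_trans (Submodule.finrank_mono ?_) (Submodule.finrank_add_le_finrank_add_finrank _ _)
  rintro x ⟨v, rfl⟩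
  exact Submodule.add_mem_sup ⟨v, rfl⟩ ⟨v, rfl⟩

lemma rank_neg' {n : ℕ} (A : Matrix (Fin n) (Fin n) ℝ) : (-A).rank = A.rank := by
  have h : (-A).mulVecLin = -(A.mulVecLin) := LinearMap.ext fun v => by simp [mulVecLin, neg_mulVec]
  rw [Matrix.rank, Matrix.rank, h, LinearMap.range_neg]

theorem stmt_6 (n : ℕ) (hn : 3 < n) :
    ¬ ∃ R : Matrix (Fin n) (Fin n) ℝ, R.IsSymm ∧ R ≠ 0 ∧
      R * R = (R.trace / 2) • R ∧
      ∃ a : ℝ, (R - a • (1 : Matrix (Fin n) (Fin n) ℝ)).rank ≤ 1 := by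
  rintro ⟨R, hsymm, hne, heq, a, hrank⟩
  have hH : R.IsHermitian := by
    rw [Matrix.IsHermitian, conjTranspose]
    ext i j; simpa using congrFun (congrFun hsymm.eq i) j
  set c : ℝ := R.trace / 2 with hc
  set μ : Fin n → ℝ := hH.eigenvalues with hμ
  -- eigenvalue equation
  have hev : ∀ i, μ i * μ i = c * μ i := by
    intro i
    have hv := hH.mulVec_eigenvectorBasis i
    have hvne : (⇑(hH.eigenvectorBasis i) : Fin n → ℝ) ≠ 0 := by
      intro h0
      exact hH.eigenvectorBasis.orthonormal.ne_zero i (by ext j; exact congrFun h0 j)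
    have h1 : (R * R) *ᵥ ⇑(hH.eigenvectorBasis i) = (μ i * μ i) • ⇑(hH.eigenvectorBasis i) := by
      rw [← mulVec_mulVec, hv, mulVec_smul, hv, smul_smul]
    have h2 : (c • R) *ᵥ ⇑(hH.eigenvectorBasis i) = (c * μ i) • ⇑(hH.eigenvectorBasis i) := by
      rw [smul_mulVec, hv, smul_smul]
    have h3 : (μ i * μ i) • (⇑(hH.eigenvectorBasis i) : Fin n → ℝ)
        = (c * μ i) • ⇑(hH.eigenvectorBasis i) := by rw [← h1, heq, h2]
    exact smul_left_injective ℝ hvne h3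
  -- c ≠ 0
  have hc0 : c ≠ 0 := by
    intro h0
    apply hne
    have hall : ∀ i, μ i = 0 := by
      intro i
      have := hev i
      rw [h0, zero_mul] at this
      exact mul_self_eq_zero.mp this
    have := hH.spectral_theorem
    have hd : Matrix.diagonal (RCLike.ofReal ∘ hH.eigenvalues) = (0 : Matrix (Fin n) (Fin n) ℝ) := by
      ext i j
      rcases eq_or_ne i j with rfl | hij
      · simpa using hall i
      · simp [Matrix.diagonal_apply_ne _ hij]
    rw [hd, map_zero] at this
    exact this
  -- trace = sum of eigenvalues
  have htr : R.trace = ∑ i, μ i := by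
    nth_rewrite 1 [hH.spectral_theorem]
    rw [Unitary.conjStarAlgAut_apply, Matrix.trace_mul_cycle, Unitary.coe_star_mul_self, one_mul, trace_diagonal]
    simp [μ]
  -- nonzero eigenvalues equal c, and there are exactly two of them
  classical
  set S : Finset (Fin n) := Finset.univ.filter (fun i => μ i ≠ 0) with hS
  have hSc : ∀ i ∈ S, μ i = c := by
    intro i hi
    have hi' : μ i ≠ 0 := (Finset.mem_filter.mp hi).2
    have := hev i
    exact mul_right_cancel₀ hi' (by linarith [hev i])
  have hsum : R.trace = S.card * c := by
    rw [htr, ← Finset.sum_filter_ne_zero, ← hS, Finset.sum_congr rfl hSc]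
    simp [mul_comm]
  have hcard : (S.card : ℝ) = 2 := by
    have : 2 * c = S.card * c := by rw [← hsum, hc]; ring
    have := mul_right_cancel₀ hc0 this
    linarith
  have hcard2 : S.card = 2 := by exact_mod_cast hcard
  -- rank R = 2
  have hrkR : R.rank = 2 := by
    rw [hH.rank_eq_card_non_zero_eigs, Fintype.card_subtype, ← hS, hcard2]
  rcases eq_or_ne a 0 with ha | ha
  · rw [ha, zero_smul, sub_zero, hrkR] at hrank
    omega
  · have h1 : (a • (1 : Matrix (Fin n) (Fin n) ℝ)) = R + (-(R - a • 1)) := by abel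
    have h2 : (a • (1 : Matrix (Fin n) (Fin n) ℝ)).rank ≤ R.rank + (R - a • 1).rank := by
      calc (a • (1 : Matrix (Fin n) (Fin n) ℝ)).rank = (R + -(R - a • 1)).rank := by rw [← h1]
        _ ≤ R.rank + (-(R - a • 1)).rank := rank_add_le' _ _
        _ = R.rank + (R - a • 1).rank := by rw [rank_neg']
    have h3 : (a • (1 : Matrix (Fin n) (Fin n) ℝ)).rank = n := by
      rw [smul_one_eq_diagonal, rank_diagonal]
      simp only [ne_eq, ha, not_false_eq_true, Fintype.card_subtype, Finset.filter_true_of_mem,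
        Finset.mem_univ, fun _ _ => trivial, Finset.card_univ, Fintype.card_fin]
      simp [ha]
    rw [h3, hrkR] at h2
    omega
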